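/- Let Y be a compact Hausdorff space and (F_i)_{i ∈ A} a finite open cover of Y. Then there exists a cover reduction of (F_i): a family of open sets (Q_I), indexed by the nonempty subsets I of A, such that the closure of each Q_I is contained in F_I := ⋂_{i ∈ I} F_i (in particular Q_I = ∅ whenever F_I = ∅), the Q_I cover Y, and whenever closure(Q_I) ∩ closure(Q_J) ≠ ∅ one has I ⊆ J or J ⊆ I. -/

import Mathlib

open Set

/-- Let `Y` be a compact Hausdorff space and `(F i)_{i ∈ A}` a finite open cover of `Y`.
Then there exists a cover reduction of `(F i)`: a family of open sets `Q I`, indexed by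
the (nonempty) subsets `I` of `A` (with `Q ∅ = ∅`), such that the closure of each `Q I`
is contained in `F_I := ⋂_{i ∈ I} F i` (in particular `Q I = ∅` whenever `F_I = ∅`),
the `Q I` cover `Y`, and whenever `closure (Q I) ∩ closure (Q J) ≠ ∅` one has
`I ⊆ J` or `J ⊆ I`. -/
theorem exists_cover_reduction
    {Y : Type*} [TopologicalSpace Y] [CompactSpace Y] [T2Space Y]
    {A : Type*} [Fintype A] [DecidableEq A]
    (F : A → Set Y) (hopen : ∀ i, IsOpen (F i)) (hcover : (⋃ i, F i) = univ) :
    ∃ Q : Finset A → Set Y,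
      (∀ I, IsOpen (Q I)) ∧
      Q ∅ = ∅ ∧
      (∀ I : Finset A, I.Nonempty → closure (Q I) ⊆ ⋂ i ∈ I, F i) ∧
      (⋃ I : Finset A, Q I) = univ ∧
      (∀ I J : Finset A, I.Nonempty → J.Nonempty →
        (closure (Q I) ∩ closure (Q J)).Nonempty → I ⊆ J ∨ J ⊆ I) := by
  classical
  -- trivial case: `A` empty forces `Y` empty
  by_cases hA : Nonempty A
  swap
  · refine ⟨fun _ => ∅, fun _ => isOpen_empty, rfl, ?_, ?_, ?_⟩
    · intro I hI; obtain ⟨i, _⟩ := hI; exact (hA ⟨i⟩).elim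
    · have : IsEmpty Y := by
        constructor; intro y
        have := hcover ▸ mem_univ y
        rcases mem_iUnion.1 this with ⟨i, _⟩
        exact hA ⟨i⟩
      simp [Set.eq_empty_of_isEmpty (univ : Set Y)]
    · intro I J hI _ _; obtain ⟨i, _⟩ := hI; exact (hA ⟨i⟩).elim
  obtain ⟨b, hb⟩ := BumpCovering.exists_isSubordinate (ι := A) (X := Y) isClosed_univ F hopen
    (by rw [hcover])
  set n := Fintype.card A with hn
  have hn1 : 1 ≤ n := Fintype.card_pos
  set ε : ℝ := 1 / (3 * n + 4) with hε
  have hεpos : 0 < ε := by positivity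
  -- the sets
  set Q : Finset A → Set Y := fun I =>
    if I = ∅ then ∅ else
      {y | ∀ i ∈ I, ε < b i y ∧ ∀ j ∉ I, b j y + ε < b i y} with hQ
  have hQopen : ∀ I, IsOpen (Q I) := by
    intro I
    rw [hQ]; dsimp only
    split
    · exact isOpen_empty
    have : {y | ∀ i ∈ I, ε < b i y ∧ ∀ j ∉ I, b j y + ε < b i y}
        = ⋂ i ∈ I, ({y | ε < b i y} ∩ ⋂ j ∈ Iᶜ, {y | b j y + ε < b i y}) := by
      ext y
      simp only [mem_iInter, mem_inter_iff, mem_setOf_eq, Finset.mem_compl]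
    rw [this]
    refine isOpen_biInter_finset fun i _ => (IsOpen.inter ?_ (isOpen_biInter_finset fun j _ => ?_))
    · exact isOpen_lt continuous_const (b i).continuous
    · exact isOpen_lt (by continuity) (b i).continuous
  -- closed supersets
  have hclos : ∀ I : Finset A, closure (Q I) ⊆
      {y | ∀ i ∈ I, ε ≤ b i y ∧ ∀ j ∉ I, b j y + ε ≤ b i y} := by
    intro I
    apply closure_minimal
    · rw [hQ]; dsimp only
      split
      · simp
      intro y hy i hi
      exact ⟨(hy i hi).1.le, fun j hj => ((hy i hi).2 j hj).le⟩
    · have : {y | ∀ i ∈ I, ε ≤ b i y ∧ ∀ j ∉ I, b j y + ε ≤ b i y}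
          = ⋂ i ∈ I, ({y | ε ≤ b i y} ∩ ⋂ j ∈ Iᶜ, {y | b j y + ε ≤ b i y}) := by
        ext y
        simp only [mem_iInter, mem_inter_iff, mem_setOf_eq, Finset.mem_compl]
      rw [this]
      refine isClosed_biInter fun i _ => (IsClosed.inter ?_ (isClosed_biInter fun j _ => ?_))
      · exact isClosed_le continuous_const (b i).continuous
      · exact isClosed_le (by continuity) (b i).continuous
  refine ⟨Q, hQopen, by simp [hQ], ?_, ?_, ?_⟩
  · -- closure Q I ⊆ ⋂ F i
    intro I hI y hy
    simp only [mem_iInter]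
    intro i hi
    have h1 : ε ≤ b i y := (hclos I hy i hi).1
    have : y ∈ tsupport (b i) :=
      subset_closure (by simp [Function.mem_support]; intro h; rw [h] at h1; linarith)
    exact hb i this
  · -- cover
    apply eq_univ_of_forall
    intro y
    -- pigeonhole: some gap interval contains no value b j y
    have key : ∃ m : Fin (n + 1), ∀ j : A, b j y ∉ Ioc (3 * (m : ℝ) * ε) (3 * m * ε + 3 * ε) := by
      by_contra h
      push_neg at h
      choose g hg using h
      have : Fintype.card A < Fintype.card (Fin (n + 1)) := by simp; exact hn.symm.le
      obtain ⟨m, m', hne, heq⟩ := Fintype.exists_ne_map_eq_of_card_lt g this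
      wlog hlt : (m : ℕ) < (m' : ℕ) generalizing m m'
      · exact this m' m hne.symm heq.symm
          (lt_of_le_of_ne (not_lt.1 hlt) (by simpa [Fin.ext_iff] using hne.symm))
      have h1 := hg m
      have h2 := hg m'
      rw [heq] at h1
      have hmm : (m : ℝ) + 1 ≤ (m' : ℝ) := by exact_mod_cast hlt
      have := h1.2
      have := h2.1
      nlinarith [hεpos]
    obtain ⟨m, hm⟩ := key
    set a : ℝ := 3 * (m : ℝ) * ε with ha
    set I : Finset A := Finset.univ.filter (fun i => a + 3 * ε < b i y) with hI
    -- there is an index with value 1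
    obtain ⟨i0, hi0⟩ := b.eventuallyEq_one' y (mem_univ y)
    have hi0' : b i0 y = 1 := hi0.eq_of_nhds
    have hmn : (m : ℝ) ≤ n := by exact_mod_cast Nat.lt_succ_iff.1 m.isLt
    have ha3 : a + 3 * ε < 1 := by
      have : a + 3 * ε ≤ (3 * n + 3) * ε := by nlinarith [hεpos]
      have h2 : (3 * (n : ℝ) + 3) * ε < 1 := by
        rw [hε, mul_one_div, div_lt_one (by positivity)]
        linarith
      linarith
    have hi0I : i0 ∈ I := by
      simp only [hI, Finset.mem_filter, Finset.mem_univ, true_and]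
      rw [hi0']; exact ha3
    have hIne : I ≠ ∅ := Finset.ne_empty_of_mem hi0I
    apply mem_iUnion.2 ⟨I, ?_⟩
    rw [hQ]
    simp only [hIne, if_false, mem_setOf_eq]
    intro i hi
    have hib : a + 3 * ε < b i y := by
      simpa [hI] using hi
    have hanneg : 0 ≤ a := by positivity
    refine ⟨by linarith, fun j hj => ?_⟩
    have hjb : ¬ (a + 3 * ε < b j y) := by simpa [hI] using hj
    push_neg at hjb
    have : b j y ≤ a := by
      rcases le_or_gt (b j y) a with h | h
      · exact h
      · exact absurd ⟨h, hjb⟩ (hm j)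
    linarith
  · -- nesting
    intro I J hI hJ ⟨y, hyI, hyJ⟩
    by_contra h
    push_neg at h
    obtain ⟨hIJ, hJI⟩ := h
    obtain ⟨i, hiI, hiJ⟩ := Finset.not_subset.1 hIJ
    obtain ⟨j, hjJ, hjI⟩ := Finset.not_subset.1 hJI
    have h1 := (hclos I hyI i hiI).2 j hjI
    have h2 := (hclos J hyJ j hjJ).2 i hiJ
    linarith
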